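/- arXiv:2305.00876 — 4 statements merged into one kernel-verified Lean document; each statement's English description precedes it below -/
import Mathlib

section
/- The expected generalization error of the weighted-average algorithm with Gaussian noise in the scalar Gaussian location problem equals 2σ²/n. Precisely, if Z₁,...,Zₙ are i.i.d. N(μ,σ²), W = Σᵢ αᵢZᵢ + N with N ~ N(0,σ_N²) independent of the Zᵢ, and Σᵢ αᵢ = 1 with αᵢ ≥ 0, then E[(Z̃ − W)²] − (1/n)Σᵢ E[(Zᵢ − W)²] = 2σ²/n, where Z̃ ~ N(μ,σ²) is independent of everything else. -/
open MeasureTheory ProbabilityTheory Real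
open scoped NNReal ENNReal

/-! ### Auxiliary lemmas: moments of the real Gaussian distribution -/

lemma integral_gaussianReal_eq (m : ℝ) {v : ℝ≥0} (hv : v ≠ 0) (f : ℝ → ℝ) :
    ∫ x, f x ∂(gaussianReal m v) = ∫ x, gaussianPDFReal m v x * f x := by
  rw [gaussianReal_of_var_ne_zero _ hv, gaussianPDF_def]
  have hmeas : Measurable fun x => Real.toNNReal (gaussianPDFReal m v x) :=
    (measurable_gaussianPDFReal m v).real_toNNReal
  have : (fun x => ENNReal.ofReal (gaussianPDFReal m v x))
      = fun x => ((Real.toNNReal (gaussianPDFReal m v x) : ℝ≥0) : ℝ≥0∞) := rfl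
  rw [this, integral_withDensity_eq_integral_smul hmeas]
  congr 1; ext x
  simp [NNReal.smul_def, Real.coe_toNNReal _ (gaussianPDFReal_nonneg m v x)]

lemma integrable_gaussianReal_iff (m : ℝ) {v : ℝ≥0} (hv : v ≠ 0) (f : ℝ → ℝ) :
    Integrable f (gaussianReal m v) ↔
      Integrable (fun x => gaussianPDFReal m v x * f x) volume := by
  rw [gaussianReal_of_var_ne_zero _ hv, gaussianPDF_def]
  have hmeas : Measurable fun x => Real.toNNReal (gaussianPDFReal m v x) :=
    (measurable_gaussianPDFReal m v).real_toNNReal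
  have : (fun x => ENNReal.ofReal (gaussianPDFReal m v x))
      = fun x => ((Real.toNNReal (gaussianPDFReal m v x) : ℝ≥0) : ℝ≥0∞) := rfl
  rw [this, integrable_withDensity_iff_integrable_smul hmeas]
  constructor <;> intro h <;> refine h.congr (Filter.Eventually.of_forall fun x => ?_) <;>
    simp [NNReal.smul_def, Real.coe_toNNReal _ (gaussianPDFReal_nonneg m v x)]

lemma pdf0_eq {v : ℝ≥0} (x : ℝ) :
    gaussianPDFReal 0 v x = (√(2 * π * v))⁻¹ * rexp (-(2 * (v:ℝ))⁻¹ * x ^ 2) := by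
  unfold gaussianPDFReal
  rw [sub_zero]
  congr 1
  rw [neg_div, div_eq_mul_inv, mul_comm ((x:ℝ)^2), neg_mul]

lemma hb_pos {v : ℝ≥0} (hv : v ≠ 0) : (0:ℝ) < (2 * (v:ℝ))⁻¹ := by
  have : (0:ℝ) < v := lt_of_le_of_ne (v.coe_nonneg) (by exact_mod_cast (Ne.symm hv))
  positivity

lemma integrable_pdf0_mul_id {v : ℝ≥0} (hv : v ≠ 0) :
    Integrable (fun x => gaussianPDFReal 0 v x * x) volume := by
  have h := (integrable_mul_exp_neg_mul_sq (hb_pos hv)).const_mul (√(2 * π * v))⁻¹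
  refine h.congr (Filter.Eventually.of_forall fun x => ?_)
  simp only [pdf0_eq]; ring

lemma integrable_pdf0_mul_sq {v : ℝ≥0} (hv : v ≠ 0) :
    Integrable (fun x => gaussianPDFReal 0 v x * x ^ 2) volume := by
  have h := (integrable_rpow_mul_exp_neg_mul_sq (hb_pos hv) (s := 2) (by norm_num)).const_mul
    (√(2 * π * v))⁻¹
  refine h.congr (Filter.Eventually.of_forall fun x => ?_)
  simp only [pdf0_eq]
  rw [show ((2:ℝ)) = ((2:ℕ):ℝ) by norm_num, Real.rpow_natCast]
  ring

lemma integral_pdf0_mul_id {v : ℝ≥0} (hv : v ≠ 0) :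
    ∫ x, gaussianPDFReal 0 v x * x = 0 := by
  have h := integral_neg_eq_self (fun x => gaussianPDFReal 0 v x * x) volume
  have hodd : ∀ x : ℝ, gaussianPDFReal 0 v (-x) * (-x) = -(gaussianPDFReal 0 v x * x) := by
    intro x
    rw [pdf0_eq, pdf0_eq, neg_sq]
    ring
  simp_rw [hodd] at h
  rw [integral_neg] at h
  linarith

lemma integral_sq_mul_exp_neg_mul_sq {b : ℝ} (hb : 0 < b) :
    ∫ x : ℝ, x ^ 2 * rexp (-b * x ^ 2) = b ^ (-(3:ℝ)/2) * (1/2) * (√π / 2) * 2 := by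
  have habs : ∀ x : ℝ, (fun t : ℝ => t ^ 2 * rexp (-b * t ^ 2)) |x|
      = x ^ 2 * rexp (-b * x ^ 2) := by intro x; simp [sq_abs]
  calc ∫ x : ℝ, x ^ 2 * rexp (-b * x ^ 2)
      = ∫ x : ℝ, (fun t : ℝ => t ^ 2 * rexp (-b * t ^ 2)) |x| := by
        simp_rw [habs]
    _ = 2 * ∫ x in Set.Ioi (0:ℝ), x ^ 2 * rexp (-b * x ^ 2) :=
        integral_comp_abs (f := fun t : ℝ => t ^ 2 * rexp (-b * t ^ 2))
    _ = 2 * ∫ x in Set.Ioi (0:ℝ), x ^ (2:ℝ) * rexp (-b * x ^ (2:ℝ)) := by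
        congr 1
        refine setIntegral_congr_fun measurableSet_Ioi fun x _ => ?_
        rw [show ((2:ℝ)) = ((2:ℕ):ℝ) by norm_num, Real.rpow_natCast]
    _ = 2 * (b ^ (-((2:ℝ) + 1) / 2) * (1 / 2) * Real.Gamma (((2:ℝ) + 1) / 2)) := by
        rw [integral_rpow_mul_exp_neg_mul_rpow (by norm_num) (by norm_num) hb]
    _ = b ^ (-(3:ℝ)/2) * (1/2) * (√π / 2) * 2 := by
        rw [show ((2:ℝ) + 1) / 2 = 1/2 + 1 by norm_num,
          Real.Gamma_add_one (by norm_num), Real.Gamma_one_half_eq]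
        norm_num
        ring

lemma integral_pdf0_mul_sq {v : ℝ≥0} (hv : v ≠ 0) :
    ∫ x, gaussianPDFReal 0 v x * x ^ 2 = v := by
  have hvpos : (0:ℝ) < v := lt_of_le_of_ne v.coe_nonneg (by exact_mod_cast hv.symm)
  have h2v : (0:ℝ) < 2 * v := by positivity
  have hb : (0:ℝ) < (2 * (v:ℝ))⁻¹ := by positivity
  calc ∫ x, gaussianPDFReal 0 v x * x ^ 2
      = ∫ x, (√(2 * π * v))⁻¹ * (x ^ 2 * rexp (-(2 * (v:ℝ))⁻¹ * x ^ 2)) := by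
        simp_rw [pdf0_eq]; congr 1; ext x; ring
    _ = (√(2 * π * v))⁻¹ * ∫ x, x ^ 2 * rexp (-(2 * (v:ℝ))⁻¹ * x ^ 2) :=
        integral_const_mul _ _
    _ = (√(2 * π * v))⁻¹ * (((2 * (v:ℝ))⁻¹) ^ (-(3:ℝ)/2) * (1/2) * (√π / 2) * 2) := by
        rw [integral_sq_mul_exp_neg_mul_sq hb]
    _ = v := by
        rw [show (-(3:ℝ)/2) = -((3:ℝ)/2) by norm_num, Real.rpow_neg (by positivity),
          Real.inv_rpow h2v.le, inv_inv,
          show ((3:ℝ)/2) = 1 + (1/2 : ℝ) by norm_num,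
          Real.rpow_add h2v, Real.rpow_one, ← Real.sqrt_eq_rpow,
          show 2 * π * (v:ℝ) = π * (2 * v) by ring,
          Real.sqrt_mul Real.pi_pos.le]
        have h1 : Real.sqrt π ≠ 0 := by positivity
        have h2 : Real.sqrt (2 * v) ≠ 0 := by positivity
        field_simp

lemma pdf_shift (m : ℝ) (v : ℝ≥0) (y : ℝ) :
    gaussianPDFReal m v (y + m) = gaussianPDFReal 0 v y := by
  unfold gaussianPDFReal
  rw [add_sub_cancel_right, sub_zero]

lemma gauss_integral_id (m : ℝ) (v : ℝ≥0) : ∫ x, x ∂(gaussianReal m v) = m := by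
  by_cases hv : v = 0
  · subst hv; rw [gaussianReal_zero_var]; simp
  · rw [integral_gaussianReal_eq m hv]
    have hshift := integral_add_right_eq_self (μ := volume)
      (fun x => gaussianPDFReal m v x * x) m
    rw [← hshift]
    simp_rw [pdf_shift]
    have h1 := integrable_pdf0_mul_id (v := v) hv
    have h0 := (integrable_gaussianPDFReal 0 v).const_mul m
    calc ∫ y, gaussianPDFReal 0 v y * (y + m)
        = ∫ y, (gaussianPDFReal 0 v y * y + m * gaussianPDFReal 0 v y) := by
          congr 1; ext y; ring
      _ = (∫ y, gaussianPDFReal 0 v y * y) + ∫ y, m * gaussianPDFReal 0 v y :=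
          integral_add h1 (by simpa using h0)
      _ = m := by
          rw [integral_pdf0_mul_id hv, integral_const_mul,
            integral_gaussianPDFReal_eq_one 0 hv]
          ring

lemma gauss_integral_sq (m : ℝ) (v : ℝ≥0) :
    ∫ x, x ^ 2 ∂(gaussianReal m v) = (v:ℝ) + m ^ 2 := by
  by_cases hv : v = 0
  · subst hv; rw [gaussianReal_zero_var]; simp
  · rw [integral_gaussianReal_eq m hv]
    have hshift := integral_add_right_eq_self (μ := volume)
      (fun x => gaussianPDFReal m v x * x ^ 2) m
    rw [← hshift]
    simp_rw [pdf_shift]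
    have h2 := integrable_pdf0_mul_sq (v := v) hv
    have h1 := (integrable_pdf0_mul_id (v := v) hv).const_mul (2 * m)
    have h0 := (integrable_gaussianPDFReal 0 v).const_mul (m ^ 2)
    calc ∫ y, gaussianPDFReal 0 v y * (y + m) ^ 2
        = ∫ y, (gaussianPDFReal 0 v y * y ^ 2 +
            (2 * m * (gaussianPDFReal 0 v y * y) + m ^ 2 * gaussianPDFReal 0 v y)) := by
          congr 1; ext y; ring
      _ = (∫ y, gaussianPDFReal 0 v y * y ^ 2) +
          ∫ y, (2 * m * (gaussianPDFReal 0 v y * y) + m ^ 2 * gaussianPDFReal 0 v y) :=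
          integral_add h2 (h1.add (by simpa using h0))
      _ = (v:ℝ) + m ^ 2 := by
          rw [integral_add h1 (by simpa using h0), integral_pdf0_mul_sq hv,
            integral_const_mul, integral_pdf0_mul_id hv, integral_const_mul,
            integral_gaussianPDFReal_eq_one 0 hv]
          ring

lemma gauss_integrable_sq (m : ℝ) (v : ℝ≥0) :
    Integrable (fun x => x ^ 2) (gaussianReal m v) := by
  by_cases hv : v = 0
  · subst hv; rw [gaussianReal_zero_var]
    exact (integrable_const (m ^ 2)).congr (ae_eq_dirac (fun x : ℝ => x ^ 2)).symm
  · rw [integrable_gaussianReal_iff m hv]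
    have h2 := integrable_pdf0_mul_sq (v := v) hv
    have h1 := (integrable_pdf0_mul_id (v := v) hv).const_mul (2 * m)
    have h0 := (integrable_gaussianPDFReal 0 v).const_mul (m ^ 2)
    have hG : Integrable (fun y => gaussianPDFReal 0 v y * (y + m) ^ 2) volume := by
      refine (h2.add (h1.add (by simpa using h0))).congr
        (Filter.Eventually.of_forall fun y => ?_)
      simp only [Pi.add_apply]; ring
    have := hG.comp_add_right (-m)
    refine this.congr (Filter.Eventually.of_forall fun x => ?_)
    simp only
    rw [show x + -m + m = x by ring, show gaussianPDFReal 0 v (x + -m) = gaussianPDFReal m v x by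
      rw [← pdf_shift m v (x + -m), show x + -m + m = x by ring]]

lemma gauss_memℒp_two (m : ℝ) (v : ℝ≥0) : MemLp id 2 (gaussianReal m v) :=
  (memLp_two_iff_integrable_sq aestronglyMeasurable_id).mpr (gauss_integrable_sq m v)

/-! ### Auxiliary lemmas: random variables with Gaussian law -/

section RV
variable {Ω : Type*} [MeasurableSpace Ω] {P : Measure Ω} [IsProbabilityMeasure P]

omit [IsProbabilityMeasure P] in
lemma aemeas_of_map {X : Ω → ℝ} {m : ℝ} {v : ℝ≥0}
    (h : Measure.map X P = gaussianReal m v) : AEMeasurable X P := by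
  by_contra hc
  rw [Measure.map_of_not_aemeasurable hc] at h
  have h1 : (0 : Measure ℝ) Set.univ = (gaussianReal m v) Set.univ := by rw [h]
  simp at h1

omit [IsProbabilityMeasure P] in
lemma EX_of_map {X : Ω → ℝ} {m : ℝ} {v : ℝ≥0}
    (h : Measure.map X P = gaussianReal m v) : ∫ ω, X ω ∂P = m := by
  rw [← gauss_integral_id m v, ← h]
  exact (integral_map (aemeas_of_map h) aestronglyMeasurable_id).symm

omit [IsProbabilityMeasure P] in
lemma EX2_of_map {X : Ω → ℝ} {m : ℝ} {v : ℝ≥0}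
    (h : Measure.map X P = gaussianReal m v) : ∫ ω, X ω ^ 2 ∂P = (v:ℝ) + m ^ 2 := by
  rw [← gauss_integral_sq m v, ← h,
    integral_map (aemeas_of_map h) (by fun_prop : AEStronglyMeasurable (fun x : ℝ => x ^ 2) _)]

omit [IsProbabilityMeasure P] in
lemma memℒp_of_map {X : Ω → ℝ} {m : ℝ} {v : ℝ≥0}
    (h : Measure.map X P = gaussianReal m v) : MemLp X 2 P := by
  have hg := gauss_memℒp_two m v
  rw [← h] at hg
  exact (memLp_map_measure_iff aestronglyMeasurable_id (aemeas_of_map h)).mp hg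

lemma L2.integrable_mul {f g : Ω → ℝ} (hf : MemLp f 2 P) (hg : MemLp g 2 P) :
    Integrable (fun ω => f ω * g ω) P := by
  have hcond : (1 : ℝ≥0∞) / 1 = 1 / 2 + 1 / 2 := by
    rw [ENNReal.div_add_div_same, one_add_one_eq_two,
      ENNReal.div_self two_ne_zero ENNReal.ofNat_ne_top, div_one]
  have h := (hg.smul (r := 1) hf).integrable le_rfl
  exact h.congr (Filter.Eventually.of_forall fun ω => by simp [smul_eq_mul])

lemma expand_sq {f g : Ω → ℝ} (hf : MemLp f 2 P) (hg : MemLp g 2 P) :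
    ∫ ω, (f ω - g ω) ^ 2 ∂P
      = ∫ ω, f ω ^ 2 ∂P - 2 * ∫ ω, f ω * g ω ∂P + ∫ ω, g ω ^ 2 ∂P := by
  have hf2 := hf.integrable_sq
  have hg2 := hg.integrable_sq
  have hfg := L2.integrable_mul hf hg
  calc ∫ ω, (f ω - g ω) ^ 2 ∂P
      = ∫ ω, (f ω ^ 2 - 2 * (f ω * g ω) + g ω ^ 2) ∂P := by congr 1; ext ω; ring
    _ = ∫ ω, (f ω ^ 2 - 2 * (f ω * g ω)) ∂P + ∫ ω, g ω ^ 2 ∂P :=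
        integral_add (hf2.sub (hfg.const_mul 2)) hg2
    _ = _ := by
        rw [integral_sub hf2 (hfg.const_mul 2), integral_const_mul]

end RV

/-- The expected generalization error of the weighted-average algorithm with Gaussian
noise in the scalar Gaussian location problem equals `2σ²/n`. -/
theorem generalization_error_scalar_gaussian
    {Ω : Type*} [MeasurableSpace Ω] (P : Measure Ω) [IsProbabilityMeasure P]
    (n : ℕ) (hn : 0 < n) (μ : ℝ) (σ2 σN2 : ℝ≥0)
    (α : Fin n → ℝ) (hα : ∀ i, 0 ≤ α i) (hsum : ∑ i, α i = 1)
    (Z : Fin n → Ω → ℝ) (N Ztil : Ω → ℝ)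
    (hindep : iIndepFun
      (Sum.elim Z (fun b : Bool => if b then Ztil else N)) P)
    (hZ : ∀ i, Measure.map (Z i) P = gaussianReal μ σ2)
    (hN : Measure.map N P = gaussianReal 0 σN2)
    (hZt : Measure.map Ztil P = gaussianReal μ σ2)
    (W : Ω → ℝ) (hW : W = fun ω => ∑ i, α i * Z i ω + N ω) :
    (∫ ω, (Ztil ω - W ω) ^ 2 ∂P) - (1 / n) * ∑ i, ∫ ω, (Z i ω - W ω) ^ 2 ∂P
      = 2 * (σ2 : ℝ) / n := by
  have hn' : (n : ℝ) ≠ 0 := Nat.cast_ne_zero.mpr hn.ne'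
  -- L2 membership
  have l2Z : ∀ i, MemLp (Z i) 2 P := fun i => memℒp_of_map (hZ i)
  have l2N : MemLp N 2 P := memℒp_of_map hN
  have l2Zt : MemLp Ztil 2 P := memℒp_of_map hZt
  have intZ : ∀ i, Integrable (Z i) P := fun i => (l2Z i).integrable one_le_two
  have intN : Integrable N P := l2N.integrable one_le_two
  have intZt : Integrable Ztil P := l2Zt.integrable one_le_two
  have l2W : MemLp W 2 P := by
    rw [hW]
    exact (memLp_finset_sum Finset.univ
      (fun i _ => ((l2Z i).const_mul (α i) : MemLp (fun ω => α i * Z i ω) 2 P))).add l2N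
  -- independence
  have indZZ : ∀ i j, i ≠ j → IndepFun (Z i) (Z j) P := fun i j hij =>
    hindep.indepFun (show (Sum.inl i : Fin n ⊕ Bool) ≠ Sum.inl j by simpa using hij)
  have indZtZ : ∀ i, IndepFun Ztil (Z i) P := fun i =>
    hindep.indepFun (show (Sum.inr true : Fin n ⊕ Bool) ≠ Sum.inl i by simp)
  have indZtN : IndepFun Ztil N P :=
    hindep.indepFun (show (Sum.inr true : Fin n ⊕ Bool) ≠ Sum.inr false by simp)
  have indZN : ∀ i, IndepFun (Z i) N P := fun i =>
    hindep.indepFun (show (Sum.inl i : Fin n ⊕ Bool) ≠ Sum.inr false by simp)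
  -- moments
  have EZ : ∀ i, ∫ ω, Z i ω ∂P = μ := fun i => EX_of_map (hZ i)
  have EZ2 : ∀ i, ∫ ω, Z i ω ^ 2 ∂P = (σ2:ℝ) + μ ^ 2 := fun i => EX2_of_map (hZ i)
  have EN : ∫ ω, N ω ∂P = 0 := EX_of_map hN
  have EZt : ∫ ω, Ztil ω ∂P = μ := EX_of_map hZt
  have EZt2 : ∫ ω, Ztil ω ^ 2 ∂P = (σ2:ℝ) + μ ^ 2 := EX2_of_map hZt
  -- pairwise products
  have PZtZ : ∀ i, ∫ ω, Ztil ω * Z i ω ∂P = μ * μ := fun i => by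
    have := (indZtZ i).integral_mul_eq_mul_integral intZt.aestronglyMeasurable (intZ i).aestronglyMeasurable
    simpa [Pi.mul_apply, EZt, EZ i] using this
  have PZtN : ∫ ω, Ztil ω * N ω ∂P = 0 := by
    have := indZtN.integral_mul_eq_mul_integral intZt.aestronglyMeasurable intN.aestronglyMeasurable
    simpa [Pi.mul_apply, EZt, EN] using this
  have PZN : ∀ i, ∫ ω, Z i ω * N ω ∂P = 0 := fun i => by
    have := (indZN i).integral_mul_eq_mul_integral (intZ i).aestronglyMeasurable intN.aestronglyMeasurable
    simpa [Pi.mul_apply, EZ i, EN] using this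
  have PZZ : ∀ i j, ∫ ω, Z i ω * Z j ω ∂P = μ ^ 2 + (if j = i then (σ2:ℝ) else 0) := by
    intro i j
    by_cases h : j = i
    · subst h
      rw [show (fun ω => Z j ω * Z j ω) = fun ω => Z j ω ^ 2 by ext ω; ring, EZ2 j]
      simp; ring
    · have := (indZZ i j (Ne.symm h)).integral_mul_eq_mul_integral (intZ i).aestronglyMeasurable (intZ j).aestronglyMeasurable
      rw [show (fun ω => Z i ω * Z j ω) = Z i * Z j from rfl, this, EZ i, EZ j]
      simp [h]; ring
  -- product with W
  have mulW : ∀ X : Ω → ℝ, MemLp X 2 P →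
      ∫ ω, X ω * W ω ∂P
        = ∑ j, α j * ∫ ω, X ω * Z j ω ∂P + ∫ ω, X ω * N ω ∂P := by
    intro X hX
    have hXZ : ∀ j, Integrable (fun ω => α j * (X ω * Z j ω)) P := fun j =>
      (L2.integrable_mul hX (l2Z j)).const_mul (α j)
    have hXN : Integrable (fun ω => X ω * N ω) P := L2.integrable_mul hX l2N
    rw [hW]
    calc ∫ ω, X ω * (∑ j, α j * Z j ω + N ω) ∂P
        = ∫ ω, ((∑ j, α j * (X ω * Z j ω)) + X ω * N ω) ∂P := by
          congr 1; ext ω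
          rw [mul_add, Finset.mul_sum]
          congr 1
          exact Finset.sum_congr rfl fun j _ => by ring
      _ = (∑ j, ∫ ω, α j * (X ω * Z j ω) ∂P) + ∫ ω, X ω * N ω ∂P := by
          rw [integral_add (integrable_finset_sum _ fun j _ => hXZ j) hXN,
            integral_finset_sum _ fun j _ => hXZ j]
      _ = _ := by simp_rw [integral_const_mul]
  have EZtW : ∫ ω, Ztil ω * W ω ∂P = μ ^ 2 := by
    rw [mulW Ztil l2Zt]
    simp_rw [PZtZ, PZtN]
    rw [← Finset.sum_mul, hsum]; ring
  have EZW : ∀ i, ∫ ω, Z i ω * W ω ∂P = α i * σ2 + μ ^ 2 := by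
    intro i
    rw [mulW (Z i) (l2Z i)]
    simp_rw [PZZ i, PZN i, mul_add, mul_ite, mul_zero]
    rw [Finset.sum_add_distrib, ← Finset.sum_mul, hsum, Finset.sum_ite_eq' Finset.univ i
      (fun j => α j * (σ2:ℝ))]
    simp; ring
  -- final assembly
  set IW := ∫ ω, W ω ^ 2 ∂P with hIW
  have hterm : ∀ i, ∫ ω, (Z i ω - W ω) ^ 2 ∂P
      = ((σ2:ℝ) + μ ^ 2 - 2 * μ ^ 2 + IW) + (-2 * (σ2:ℝ)) * α i := fun i => by
    rw [expand_sq (l2Z i) l2W, EZ2 i, EZW i]; ring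
  rw [expand_sq l2Zt l2W, EZt2, EZtW]
  rw [Finset.sum_congr rfl fun i _ => hterm i]
  rw [Finset.sum_add_distrib, ← Finset.mul_sum, hsum, Finset.sum_const, Finset.card_univ,
    Fintype.card_fin, nsmul_eq_mul]
  field_simp
  ring
end

section
/- Exact tightness for the scalar Gaussian location problem: with Zᵢ i.i.d. N(μ,σ²), W = ΣⱼαⱼZⱼ + N, Σαⱼ = 1, αⱼ ≥ 0, N ~ N(0,σ_N²) independent, and sᵢ² = Σ_{j≠i}αⱼ²σ² + σ_N² > 0, one has for each i: inf_{λ>0} [ (E[KL(P_{W|Zᵢ}‖Qⁱ_W)] + E[Λ_{Fᵢ,Qⁱ_W}(λ)]) / λ ] = 2αᵢσ², where E[KL] = αᵢ²σ²/(2sᵢ²) and E[Λ(λ)] = 2λ²σ²sᵢ²; consequently (1/n)Σᵢ of these equals 2σ²/n, matching the true generalization error. -/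
open MeasureTheory ProbabilityTheory Real
open scoped NNReal ENNReal

/-- Exact tightness for the scalar Gaussian location problem:
inf_{λ>0}[(E[KL] + E[Λ(λ)])/λ] = 2αᵢσ² with E[KL] = αᵢ²σ²/(2sᵢ²),
E[Λ(λ)] = 2λ²σ²sᵢ², and (1/n)Σᵢ 2αᵢσ² = 2σ²/n. -/
theorem exact_tightness_scalar_gaussian
    (n : ℕ) (hn : 0 < n) (σ2 σN2 : ℝ) (hσ : 0 < σ2) (hσN : 0 ≤ σN2)
    (α : Fin n → ℝ) (hα : ∀ i, 0 ≤ α i) (hsum : ∑ i, α i = 1)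
    (s2 : Fin n → ℝ)
    (hs2 : ∀ i, s2 i = ∑ j ∈ Finset.univ.erase i, α j ^ 2 * σ2 + σN2)
    (hpos : ∀ i, 0 < s2 i) :
    (∀ i, (⨅ l : Set.Ioi (0 : ℝ),
        (α i ^ 2 * σ2 / (2 * s2 i) + 2 * (l : ℝ) ^ 2 * σ2 * s2 i) / (l : ℝ))
      = 2 * α i * σ2)
    ∧ (1 / n : ℝ) * ∑ i, 2 * α i * σ2 = 2 * σ2 / n := by
  constructor
  · intro i
    have hs := hpos i
    have hai := hα i
    set a := α i with ha
    set s := s2 i with hsdef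
    have key : ∀ l : Set.Ioi (0 : ℝ),
        2 * a * σ2 ≤ (a ^ 2 * σ2 / (2 * s) + 2 * (l : ℝ) ^ 2 * σ2 * s) / (l : ℝ) := by
      rintro ⟨l, hl⟩
      have hl' : (0 : ℝ) < l := hl
      rw [le_div_iff₀ hl']
      have h1 : 0 ≤ σ2 / (2 * s) * (a - 2 * s * l) ^ 2 := by positivity
      have hexp : a ^ 2 * σ2 / (2 * s) + 2 * l ^ 2 * σ2 * s - 2 * a * σ2 * l
          = σ2 / (2 * s) * (a - 2 * s * l) ^ 2 := by
        field_simp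
        ring
      linarith [hexp ▸ h1]
    have hbdd : BddBelow (Set.range fun l : Set.Ioi (0 : ℝ) =>
        (a ^ 2 * σ2 / (2 * s) + 2 * (l : ℝ) ^ 2 * σ2 * s) / (l : ℝ)) := by
      refine ⟨2 * a * σ2, ?_⟩
      rintro x ⟨l, rfl⟩
      exact key l
    apply le_antisymm
    · rcases eq_or_lt_of_le hai with h0 | h0
      · -- a = 0
        have ha0 : a = 0 := h0.symm
        have : ∀ ε : ℝ, 0 < ε → (⨅ l : Set.Ioi (0 : ℝ),
            (a ^ 2 * σ2 / (2 * s) + 2 * (l : ℝ) ^ 2 * σ2 * s) / (l : ℝ)) ≤ 2 * a * σ2 + ε := by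
          intro ε hε
          have hl : (0 : ℝ) < ε / (2 * σ2 * s) := by positivity
          refine ciInf_le_of_le hbdd ⟨ε / (2 * σ2 * s), hl⟩ ?_
          show (a ^ 2 * σ2 / (2 * s) + 2 * (ε / (2 * σ2 * s)) ^ 2 * σ2 * s) / (ε / (2 * σ2 * s))
            ≤ 2 * a * σ2 + ε
          have hval : (a ^ 2 * σ2 / (2 * s) + 2 * (ε / (2 * σ2 * s)) ^ 2 * σ2 * s)
              / (ε / (2 * σ2 * s)) = ε := by
            rw [ha0]
            field_simp
            ring
          rw [hval, ha0]
          linarith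
        exact le_of_forall_pos_le_add this
      · refine ciInf_le_of_le hbdd ⟨a / (2 * s), Set.mem_Ioi.mpr (by positivity)⟩ ?_
        show (a ^ 2 * σ2 / (2 * s) + 2 * (a / (2 * s)) ^ 2 * σ2 * s) / (a / (2 * s)) ≤ 2 * a * σ2
        have hval : (a ^ 2 * σ2 / (2 * s) + 2 * (a / (2 * s)) ^ 2 * σ2 * s) / (a / (2 * s))
            = 2 * a * σ2 := by
          field_simp
          ring
        exact le_of_eq hval
    · exact le_ciInf key
  · have h : ∑ i, 2 * α i * σ2 = 2 * σ2 := by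
      have : ∑ i, 2 * α i * σ2 = (∑ i, α i) * (2 * σ2) := by
        rw [Finset.sum_mul]
        apply Finset.sum_congr rfl
        intros; ring
      rw [this, hsum, one_mul]
    rw [h]
    have hn' : (n : ℝ) ≠ 0 := Nat.cast_ne_zero.mpr hn.ne'
    field_simp
end

section
/- Vector Gaussian generalization error: if Z₁,...,Zₙ are i.i.d. d-dimensional Gaussians N(μ,Σ), W = ΣᵢαᵢZᵢ + N with N ~ N(0,σ_N²I) independent and Σᵢαᵢ = 1, αᵢ ≥ 0, and the loss is ℓ(w,z) = (w−z)ᵀA(w−z) for a symmetric positive definite matrix A, then E[(Z̃−W)ᵀA(Z̃−W)] − (1/n)ΣᵢE[(Zᵢ−W)ᵀA(Zᵢ−W)] = 2·Tr(AΣ)/n, where Z̃ ~ N(μ,Σ) is independent of everything else. -/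
open MeasureTheory ProbabilityTheory Real Matrix
open scoped NNReal ENNReal

lemma my_int_sq_gauss {b : ℝ} (hb : 0 < b) :
    ∫ x : ℝ, x ^ 2 * exp (-b * x ^ 2) = √π / (2 * b) * √b⁻¹ := by
  have h1 : (fun x : ℝ => x ^ 2 * exp (-b * x ^ 2))
      = fun x : ℝ => (fun t : ℝ => t ^ 2 * exp (-b * t ^ 2)) |x| := by
    ext x; simp [sq_abs]
  rw [h1, integral_comp_abs (f := fun t : ℝ => t ^ 2 * exp (-b * t ^ 2))]
  have h2 : ∫ x in Set.Ioi (0:ℝ), x ^ 2 * exp (-b * x ^ 2)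
      = ∫ x in Set.Ioi (0:ℝ), x ^ (2:ℝ) * exp (-b * x ^ (2:ℝ)) := by
    congr 1; ext x
    rw [show (2:ℝ) = ((2:ℕ):ℝ) by norm_num, Real.rpow_natCast]
  rw [h2, integral_rpow_mul_exp_neg_mul_rpow two_pos (by norm_num) hb]
  have h3 : ((2:ℝ) + 1) / 2 = 1 / 2 + 1 := by norm_num
  rw [h3, Real.Gamma_add_one (by norm_num), Real.Gamma_one_half_eq]
  have h4 : b ^ (-((2:ℝ) + 1) / 2) = b⁻¹ * √b⁻¹ := by
    rw [show -((2:ℝ)+1)/2 = (-1) + (-(1/2)) by norm_num, Real.rpow_add hb,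
      Real.rpow_neg_one, Real.rpow_neg hb.le, ← Real.sqrt_eq_rpow, Real.sqrt_inv]
  rw [h4]; ring

lemma my_int_odd_gauss {b : ℝ} (hb : 0 < b) :
    ∫ x : ℝ, x * exp (-b * x ^ 2) = 0 := by
  have h := MeasureTheory.integral_neg_eq_self (fun x : ℝ => x * exp (-b * x ^ 2)) volume
  simp only [neg_sq, neg_mul] at h
  rw [integral_neg] at h
  simp only [neg_mul] at *
  linarith

section gaussmoments

variable (m : ℝ) {v : ℝ≥0}

lemma my_pdf_eq (hv : v ≠ 0) (x : ℝ) : gaussianPDFReal m v x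
    = (√(2 * π * v))⁻¹ * exp (-(2 * (v:ℝ))⁻¹ * (x - m) ^ 2) := by
  rw [gaussianPDFReal]
  congr 1
  rw [neg_div, div_eq_inv_mul, neg_mul]

lemma my_hb (hv : v ≠ 0) : 0 < (2 * (v:ℝ))⁻¹ := by
  have : 0 < (v:ℝ) := by positivity
  positivity

lemma my_int_sq_exp {b : ℝ} (hb : 0 < b) :
    Integrable (fun x : ℝ => x ^ 2 * exp (-b * x ^ 2)) := by
  have h := integrable_rpow_mul_exp_neg_mul_sq hb (s := 2) (by norm_num)
  refine h.congr (Filter.Eventually.of_forall fun x => ?_)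
  show x ^ (2:ℝ) * exp (-b * x ^ 2) = x ^ 2 * exp (-b * x ^ 2)
  rw [show ((2:ℝ)) = ((2:ℕ):ℝ) by norm_num, Real.rpow_natCast]

lemma my_pdf_integrable_mul (hv : v ≠ 0) :
    Integrable (fun x : ℝ => x * gaussianPDFReal m v x) := by
  set c : ℝ := (√(2 * π * v))⁻¹ with hc
  set b : ℝ := (2 * (v:ℝ))⁻¹ with hbdef
  have hb : 0 < b := my_hb hv
  have h1 : Integrable (fun x : ℝ => c * ((x - m) * exp (-b * (x - m) ^ 2))
      + m * gaussianPDFReal m v x) :=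
    (((integrable_mul_exp_neg_mul_sq hb).comp_sub_right m).const_mul c).add
      ((integrable_gaussianPDFReal m v).const_mul m)
  refine h1.congr (Filter.Eventually.of_forall fun x => ?_)
  simp only [my_pdf_eq m hv]
  ring

lemma my_pdf_integrable_sq (hv : v ≠ 0) :
    Integrable (fun x : ℝ => x ^ 2 * gaussianPDFReal m v x) := by
  set c : ℝ := (√(2 * π * v))⁻¹ with hc
  set b : ℝ := (2 * (v:ℝ))⁻¹ with hbdef
  have hb : 0 < b := my_hb hv
  have h1 : Integrable (fun x : ℝ => c * ((x - m) ^ 2 * exp (-b * (x - m) ^ 2))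
      + ((2 * m * c) * ((x - m) * exp (-b * (x - m) ^ 2)) + m ^ 2 * gaussianPDFReal m v x)) :=
    (((my_int_sq_exp hb).comp_sub_right m).const_mul c).add
      ((((integrable_mul_exp_neg_mul_sq hb).comp_sub_right m).const_mul (2 * m * c)).add
        ((integrable_gaussianPDFReal m v).const_mul (m ^ 2)))
  refine h1.congr (Filter.Eventually.of_forall fun x => ?_)
  simp only [my_pdf_eq m hv]
  ring

lemma my_pdf_integral_mul (hv : v ≠ 0) :
    ∫ x : ℝ, x * gaussianPDFReal m v x = m := by
  set c : ℝ := (√(2 * π * v))⁻¹ with hc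
  set b : ℝ := (2 * (v:ℝ))⁻¹ with hbdef
  have hb : 0 < b := my_hb hv
  have key : (fun x : ℝ => x * gaussianPDFReal m v x)
      = fun x : ℝ => (fun t : ℝ => c * (t * exp (-b * t ^ 2)) + m * gaussianPDFReal 0 v t) (x - m) := by
    ext x
    simp only [my_pdf_eq m hv, my_pdf_eq 0 hv, sub_zero]
    ring
  rw [key, integral_sub_right_eq_self (μ := volume)
    (fun t : ℝ => c * (t * exp (-b * t ^ 2)) + m * gaussianPDFReal 0 v t) m, integral_add
    ((integrable_mul_exp_neg_mul_sq hb).const_mul c)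
    ((integrable_gaussianPDFReal 0 v).const_mul m),
    integral_const_mul, integral_const_mul, my_int_odd_gauss hb,
    integral_gaussianPDFReal_eq_one 0 hv]
  ring

lemma my_pdf_integral_sq (hv : v ≠ 0) :
    ∫ x : ℝ, x ^ 2 * gaussianPDFReal m v x = (v:ℝ) + m ^ 2 := by
  set c : ℝ := (√(2 * π * v))⁻¹ with hc
  set b : ℝ := (2 * (v:ℝ))⁻¹ with hbdef
  have hb : 0 < b := my_hb hv
  have key : (fun x : ℝ => x ^ 2 * gaussianPDFReal m v x)
      = fun x : ℝ => (fun t : ℝ => c * (t ^ 2 * exp (-b * t ^ 2))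
          + ((2 * m * c) * (t * exp (-b * t ^ 2)) + m ^ 2 * gaussianPDFReal 0 v t)) (x - m) := by
    ext x
    simp only [my_pdf_eq m hv, my_pdf_eq 0 hv, sub_zero]
    ring
  rw [key, integral_sub_right_eq_self (μ := volume)
    (fun t : ℝ => c * (t ^ 2 * exp (-b * t ^ 2))
      + ((2 * m * c) * (t * exp (-b * t ^ 2)) + m ^ 2 * gaussianPDFReal 0 v t)) m, integral_add
    ((my_int_sq_exp hb).const_mul c)
    (show Integrable (fun t : ℝ => (2 * m * c) * (t * exp (-b * t ^ 2))
        + m ^ 2 * gaussianPDFReal 0 v t) volume from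
      (((integrable_mul_exp_neg_mul_sq hb).const_mul (2 * m * c))).add
        ((integrable_gaussianPDFReal 0 v).const_mul (m ^ 2))),
    integral_add (((integrable_mul_exp_neg_mul_sq hb).const_mul (2 * m * c)))
      ((integrable_gaussianPDFReal 0 v).const_mul (m ^ 2)),
    integral_const_mul, integral_const_mul, integral_const_mul,
    my_int_odd_gauss hb, my_int_sq_gauss hb, integral_gaussianPDFReal_eq_one 0 hv]
  have hv' : 0 < (v:ℝ) := by positivity
  have h2v : (0:ℝ) < 2 * (v:ℝ) := by positivity
  have hπ : (0:ℝ) < √π := Real.sqrt_pos.mpr Real.pi_pos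
  have hs2v : (0:ℝ) < √(2 * (v:ℝ)) := Real.sqrt_pos.mpr h2v
  have hbv : b⁻¹ = 2 * (v:ℝ) := by rw [hbdef, inv_inv]
  have hcc : c = (√(2 * (v:ℝ)) * √π)⁻¹ := by
    rw [hc]
    congr 1
    rw [← Real.sqrt_mul (by positivity)]
    ring_nf
  have h2b : (2:ℝ) * b = ((v:ℝ))⁻¹ := by rw [hbdef]; field_simp
  have hsq : √(2 * (v:ℝ)) * √(2 * (v:ℝ)) = 2 * (v:ℝ) := Real.mul_self_sqrt h2v.le
  rw [hbv, hcc, h2b, div_inv_eq_mul]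
  field_simp
  nlinarith [hsq, hπ, hs2v, hv']

end gaussmoments

section gaussrealapi

variable (m : ℝ) (v : ℝ≥0)

lemma my_gr_integral (g : ℝ → ℝ) (hv : v ≠ 0) :
    ∫ x, g x ∂(gaussianReal m v) = ∫ x, gaussianPDFReal m v x * g x := by
  rw [gaussianReal_of_var_ne_zero m hv]
  have hd : gaussianPDF m v = fun x => ((gaussianPDFReal m v x).toNNReal : ℝ≥0∞) := by
    funext x; rfl
  rw [hd, integral_withDensity_eq_integral_smul
    (by exact (measurable_gaussianPDFReal m v).real_toNNReal) g]
  congr 1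
  funext x
  rw [NNReal.smul_def, smul_eq_mul, Real.coe_toNNReal _ (gaussianPDFReal_nonneg m v x)]

lemma my_gr_integrable {g : ℝ → ℝ} (hv : v ≠ 0)
    (h : Integrable (fun x => g x * gaussianPDFReal m v x) volume) :
    Integrable g (gaussianReal m v) := by
  rw [gaussianReal_of_var_ne_zero m hv]
  rw [integrable_withDensity_iff (measurable_gaussianPDF m v)
    (Filter.Eventually.of_forall fun x => ENNReal.ofReal_lt_top)]
  refine h.congr (Filter.Eventually.of_forall fun x => ?_)
  simp only [gaussianPDF_def]
  rw [ENNReal.toReal_ofReal (gaussianPDFReal_nonneg m v x)]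

lemma my_gr_int_id : Integrable (fun x => x) (gaussianReal m v) := by
  by_cases hv : v = 0
  · subst hv
    simp only [gaussianReal_zero_var]
    exact (integrable_const (m:ℝ)).congr
      ((MeasureTheory.ae_dirac_iff
        (measurableSet_eq_fun measurable_const measurable_id)).2 rfl)
  · exact my_gr_integrable m v hv
      (((my_pdf_integrable_mul m hv)).congr (Filter.Eventually.of_forall fun x => rfl))

lemma my_gr_int_sq : Integrable (fun x => x ^ 2) (gaussianReal m v) := by
  by_cases hv : v = 0
  · subst hv
    simp only [gaussianReal_zero_var]
    exact (integrable_const ((m:ℝ) ^ 2)).congr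
      ((MeasureTheory.ae_dirac_iff
        (measurableSet_eq_fun measurable_const (measurable_id.pow_const 2))).2 rfl)
  · exact my_gr_integrable m v hv
      (((my_pdf_integrable_sq m hv)).congr (Filter.Eventually.of_forall fun x => rfl))

lemma my_gr_mean : ∫ x, x ∂(gaussianReal m v) = m := by
  by_cases hv : v = 0
  · subst hv; simp
  · rw [my_gr_integral m v _ hv]
    rw [show (fun x => gaussianPDFReal m v x * x) = fun x => x * gaussianPDFReal m v x from
      funext fun x => mul_comm _ _]
    exact my_pdf_integral_mul m hv

lemma my_gr_moment2 : ∫ x, x ^ 2 ∂(gaussianReal m v) = (v:ℝ) + m ^ 2 := by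
  by_cases hv : v = 0
  · subst hv; simp
  · rw [my_gr_integral m v _ hv]
    rw [show (fun x => gaussianPDFReal m v x * x ^ 2) = fun x => x ^ 2 * gaussianPDFReal m v x from
      funext fun x => mul_comm _ _]
    exact my_pdf_integral_sq m hv

lemma my_gr_memLp2 : MemLp (fun x : ℝ => x) 2 (gaussianReal m v) :=
  (memLp_two_iff_integrable_sq measurable_id.aestronglyMeasurable).2 (my_gr_int_sq m v)

end gaussrealapi

section vec
open Matrix
variable {Ω : Type*} [MeasurableSpace Ω] {P : Measure Ω} [IsProbabilityMeasure P]
  {d : ℕ} {X : Ω → Fin d → ℝ} {c : Fin d → ℝ} {C : Matrix (Fin d) (Fin d) ℝ}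

/-- Gaussianity of a random vector via 1-dim projections. -/
def IsGaussVec (P : Measure Ω) (X : Ω → Fin d → ℝ) (c : Fin d → ℝ)
    (C : Matrix (Fin d) (Fin d) ℝ) : Prop :=
  ∀ u : Fin d → ℝ, Measure.map (fun ω => u ⬝ᵥ X ω) P
    = gaussianReal (u ⬝ᵥ c) (Real.toNNReal (u ⬝ᵥ C.mulVec u))

namespace IsGaussVec

lemma aemeas (h : IsGaussVec P X c C) (u : Fin d → ℝ) :
    AEMeasurable (fun ω => u ⬝ᵥ X ω) P := by
  by_contra hc
  have h0 := Measure.map_of_not_aemeasurable hc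
  rw [h u] at h0
  exact IsProbabilityMeasure.ne_zero _ h0

lemma memLp (h : IsGaussVec P X c C) (u : Fin d → ℝ) :
    MemLp (fun ω => u ⬝ᵥ X ω) 2 P := by
  have := (memLp_map_measure_iff (f := fun ω => u ⬝ᵥ X ω) (g := fun x : ℝ => x)
    aestronglyMeasurable_id (h.aemeas u)).1 (by rw [h u]; exact my_gr_memLp2 _ _)
  exact this

lemma integral_proj (h : IsGaussVec P X c C) (u : Fin d → ℝ) :
    ∫ ω, u ⬝ᵥ X ω ∂P = u ⬝ᵥ c := by
  rw [← integral_map (h.aemeas u) (f := fun x : ℝ => x) aestronglyMeasurable_id, h u,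
    my_gr_mean]

lemma integral_proj_sq (h : IsGaussVec P X c C) (hC : ∀ u, 0 ≤ u ⬝ᵥ C.mulVec u)
    (u : Fin d → ℝ) :
    ∫ ω, (u ⬝ᵥ X ω) ^ 2 ∂P = u ⬝ᵥ C.mulVec u + (u ⬝ᵥ c) ^ 2 := by
  have hm : AEStronglyMeasurable (fun x : ℝ => x ^ 2) (Measure.map (fun ω => u ⬝ᵥ X ω) P) :=
    (measurable_id.pow_const 2).aestronglyMeasurable
  rw [← integral_map (h.aemeas u) hm, h u, my_gr_moment2,
    Real.coe_toNNReal _ (hC u)]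

lemma coord_eq (X : Ω → Fin d → ℝ) (j : Fin d) :
    (fun ω => X ω j) = fun ω => (Pi.single j (1:ℝ)) ⬝ᵥ X ω := by
  funext ω; rw [single_dotProduct, one_mul]

lemma coord_memLp (h : IsGaussVec P X c C) (j : Fin d) :
    MemLp (fun ω => X ω j) 2 P := by
  rw [coord_eq X j]; exact h.memLp _

lemma coord_integrable (h : IsGaussVec P X c C) (j : Fin d) :
    Integrable (fun ω => X ω j) P :=
  (h.coord_memLp j).integrable one_le_two

lemma coord_integral (h : IsGaussVec P X c C) (j : Fin d) :
    ∫ ω, X ω j ∂P = c j := by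
  rw [coord_eq X j, h.integral_proj, single_dotProduct, one_mul]

lemma coord_sq_integral (h : IsGaussVec P X c C) (hC : ∀ u, 0 ≤ u ⬝ᵥ C.mulVec u) (j : Fin d) :
    ∫ ω, X ω j ^ 2 ∂P = C j j + c j ^ 2 := by
  have h2 := h.integral_proj_sq hC (Pi.single j 1)
  simp only [single_dotProduct, one_mul, Matrix.mulVec_single_one, Matrix.col_apply] at h2
  exact h2

lemma pair_eq (X : Ω → Fin d → ℝ) (j k : Fin d) :
    (fun ω => X ω j + X ω k)
      = fun ω => ((Pi.single j (1:ℝ)) + (Pi.single k (1:ℝ))) ⬝ᵥ X ω := by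
  funext ω; rw [add_dotProduct, single_dotProduct, single_dotProduct,
    one_mul, one_mul]

lemma pair_sq_integral (h : IsGaussVec P X c C) (hC : ∀ u, 0 ≤ u ⬝ᵥ C.mulVec u) (j k : Fin d) :
    ∫ ω, (X ω j + X ω k) ^ 2 ∂P
      = (C j j + C j k + (C k j + C k k)) + (c j + c k) ^ 2 := by
  have h2 := h.integral_proj_sq hC (Pi.single j 1 + Pi.single k 1)
  simp only [add_dotProduct, single_dotProduct, one_mul, Matrix.mulVec_add,
    Matrix.mulVec_single_one, Matrix.col_apply, dotProduct_add, dotProduct_single,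
    Pi.add_apply] at h2
  convert h2 using 2 <;> ring

lemma mul_integrable (h : IsGaussVec P X c C) (j k : Fin d) :
    Integrable (fun ω => X ω j * X ω k) P := by
  have h1 : Integrable (fun ω => ((X ω j + X ω k) ^ 2 - X ω j ^ 2 - X ω k ^ 2) / 2) P := by
    refine Integrable.div_const ?_ 2
    refine Integrable.sub (Integrable.sub ?_ ?_) ?_
    · have : MemLp (fun ω => X ω j + X ω k) 2 P := (h.coord_memLp j).add (h.coord_memLp k)
      exact this.integrable_sq
    · exact (h.coord_memLp j).integrable_sq
    · exact (h.coord_memLp k).integrable_sq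
  refine h1.congr (Filter.Eventually.of_forall fun ω => ?_)
  ring

lemma mul_integral (h : IsGaussVec P X c C) (hC : ∀ u, 0 ≤ u ⬝ᵥ C.mulVec u) (j k : Fin d) :
    ∫ ω, X ω j * X ω k ∂P = (C j k + C k j) / 2 + c j * c k := by
  have key : (fun ω => X ω j * X ω k)
      = fun ω => ((X ω j + X ω k) ^ 2 - X ω j ^ 2 - X ω k ^ 2) / 2 := by
    funext ω; ring
  have hsum : MemLp (fun ω => X ω j + X ω k) 2 P := (h.coord_memLp j).add (h.coord_memLp k)
  rw [key]
  rw [integral_div]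
  rw [integral_sub (show Integrable (fun ω => (X ω j + X ω k) ^ 2 - X ω j ^ 2) P from
      Integrable.sub hsum.integrable_sq (h.coord_memLp j).integrable_sq)
    (h.coord_memLp k).integrable_sq,
    integral_sub hsum.integrable_sq (h.coord_memLp j).integrable_sq,
    h.pair_sq_integral hC, h.coord_sq_integral hC, h.coord_sq_integral hC]
  ring

end IsGaussVec
end vec

/-- Vector Gaussian generalization error: with loss (w−z)ᵀA(w−z), the expected
generalization error of the weighted-average algorithm equals 2·Tr(AΣ)/n.
Gaussianity of a random vector is expressed via one-dimensional projections. -/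
theorem generalization_error_vector_gaussian
    {Ω : Type*} [MeasurableSpace Ω] (P : Measure Ω) [IsProbabilityMeasure P]
    (n d : ℕ) (hn : 0 < n) (μ : Fin d → ℝ) (S : Matrix (Fin d) (Fin d) ℝ)
    (hS : S.PosSemidef) (σN2 : ℝ) (hσN : 0 ≤ σN2)
    (A : Matrix (Fin d) (Fin d) ℝ) (hA : A.PosDef)
    (α : Fin n → ℝ) (hα : ∀ i, 0 ≤ α i) (hsum : ∑ i, α i = 1)
    (Z : Fin n → Ω → Fin d → ℝ) (N Zt : Ω → Fin d → ℝ)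
    (hindep : iIndepFun
      (Sum.elim Z (fun b : Bool => if b then Zt else N)) P)
    (hZ : ∀ i, ∀ u : Fin d → ℝ, Measure.map (fun ω => u ⬝ᵥ Z i ω) P
        = gaussianReal (u ⬝ᵥ μ) (Real.toNNReal (u ⬝ᵥ S.mulVec u)))
    (hZt : ∀ u : Fin d → ℝ, Measure.map (fun ω => u ⬝ᵥ Zt ω) P
        = gaussianReal (u ⬝ᵥ μ) (Real.toNNReal (u ⬝ᵥ S.mulVec u)))
    (hN : ∀ u : Fin d → ℝ, Measure.map (fun ω => u ⬝ᵥ N ω) P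
        = gaussianReal 0 (Real.toNNReal (σN2 * (u ⬝ᵥ u))))
    (W : Ω → Fin d → ℝ) (hW : W = fun ω => (∑ i, α i • Z i ω) + N ω) :
    (∫ ω, (Zt ω - W ω) ⬝ᵥ A.mulVec (Zt ω - W ω) ∂P)
      - (1 / n) * ∑ i, ∫ ω, (Z i ω - W ω) ⬝ᵥ A.mulVec (Z i ω - W ω) ∂P
    = 2 * (A * S).trace / n := by
  classical
  set G : Fin n ⊕ Bool → Ω → Fin d → ℝ := Sum.elim Z (fun b : Bool => if b then Zt else N)
    with hGdef
  set M : Fin n ⊕ Bool → Fin d → ℝ :=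
    Sum.elim (fun _ => μ) (fun b : Bool => if b then μ else 0) with hMdef
  set Cv : Fin n ⊕ Bool → Matrix (Fin d) (Fin d) ℝ :=
    Sum.elim (fun _ => S) (fun b : Bool => if b then S else σN2 • (1 : Matrix (Fin d) (Fin d) ℝ))
    with hCvdef
  -- positivity of the quadratic forms
  have hSpos : ∀ u : Fin d → ℝ, 0 ≤ u ⬝ᵥ S.mulVec u := by
    intro u
    have := hS.dotProduct_mulVec_nonneg u
    simpa using this
  have hCpos : ∀ p (u : Fin d → ℝ), 0 ≤ u ⬝ᵥ (Cv p).mulVec u := by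
    rintro (i | b) u
    · exact hSpos u
    · cases b
      · have h1 : u ⬝ᵥ ((σN2 • (1 : Matrix (Fin d) (Fin d) ℝ)).mulVec u) = σN2 * (u ⬝ᵥ u) := by
          rw [Matrix.smul_mulVec, Matrix.one_mulVec, dotProduct_smul, smul_eq_mul]
        simp only [hCvdef, Sum.elim_inr, if_neg Bool.false_ne_true]
        rw [h1]
        have : (0:ℝ) ≤ u ⬝ᵥ u := by
          simp only [dotProduct]
          exact Finset.sum_nonneg fun i _ => mul_self_nonneg _
        positivity
      · simpa only [hCvdef, Sum.elim_inr, if_pos rfl, if_true] using hSpos u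
  -- each vector of the family is Gaussian
  have hGauss : ∀ p, IsGaussVec P (G p) (M p) (Cv p) := by
    rintro (i | b)
    · intro u; simpa only [hGdef, hMdef, hCvdef, Sum.elim_inl] using hZ i u
    · cases b
      · intro u
        simp only [hGdef, hMdef, hCvdef, Sum.elim_inr, if_neg Bool.false_ne_true]
        rw [hN u]
        congr 1
        · rw [dotProduct_zero]
        · rw [Matrix.smul_mulVec, Matrix.one_mulVec, dotProduct_smul, smul_eq_mul]
      · intro u
        simpa only [hGdef, hMdef, hCvdef, Sum.elim_inr, if_pos rfl, if_true] using hZt u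
  -- second moments
  have hinteg : ∀ p q (j k : Fin d), Integrable (fun ω => G p ω j * G q ω k) P := by
    intro p q j k
    by_cases hpq : p = q
    · subst hpq; exact (hGauss p).mul_integrable j k
    · have hind : IndepFun (fun ω => G p ω j) (fun ω => G q ω k) P :=
        (hindep.indepFun hpq).comp (measurable_pi_apply j) (measurable_pi_apply k)
      exact hind.integrable_mul ((hGauss p).coord_integrable j) ((hGauss q).coord_integrable k)
  have hmom : ∀ p q (j k : Fin d), ∫ ω, G p ω j * G q ω k ∂P
      = (if p = q then (Cv p j k + Cv p k j) / 2 else 0) + M p j * M q k := by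
    intro p q j k
    by_cases hpq : p = q
    · subst hpq
      rw [if_pos rfl]
      exact (hGauss p).mul_integral (hCpos p) j k
    · rw [if_neg hpq, zero_add]
      have hind : IndepFun (fun ω => G p ω j) (fun ω => G q ω k) P :=
        (hindep.indepFun hpq).comp (measurable_pi_apply j) (measurable_pi_apply k)
      have h1 := hind.integral_fun_mul_eq_mul_integral ((hGauss p).coord_integrable j).aestronglyMeasurable
        ((hGauss q).coord_integrable k).aestronglyMeasurable
      have h2 : ∫ ω, G p ω j * G q ω k ∂P
          = (∫ ω, G p ω j ∂P) * ∫ ω, G q ω k ∂P := h1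
      rw [h2, (hGauss p).coord_integral j, (hGauss q).coord_integral k]
  -- the master computation
  have main : ∀ (b : Fin n ⊕ Bool → ℝ) (Y : Ω → Fin d → ℝ),
      (∀ ω j, Y ω j = ∑ p, b p * G p ω j) → (∀ j, (∑ p, b p * M p j) = 0) →
      ∫ ω, Y ω ⬝ᵥ A.mulVec (Y ω) ∂P
        = ∑ p, (b p) ^ 2 * (∑ j, ∑ k, A j k * ((Cv p j k + Cv p k j) / 2)) := by
    intro b Y hY hmean
    have hexp : ∀ j k, (fun ω => Y ω j * Y ω k)
        = fun ω => ∑ p, ∑ q, (b p * b q) * (G p ω j * G q ω k) := by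
      intro j k
      funext ω
      rw [hY ω j, hY ω k, Finset.sum_mul_sum]
      exact Finset.sum_congr rfl fun p _ => Finset.sum_congr rfl fun q _ => by ring
    have hYint : ∀ j k, Integrable (fun ω => Y ω j * Y ω k) P := by
      intro j k
      rw [hexp j k]
      exact integrable_finset_sum _ fun p _ => integrable_finset_sum _ fun q _ =>
        (hinteg p q j k).const_mul _
    have hYmom : ∀ j k, ∫ ω, Y ω j * Y ω k ∂P
        = ∑ p, (b p) ^ 2 * ((Cv p j k + Cv p k j) / 2) := by
      intro j k
      have h1 : ∫ ω, Y ω j * Y ω k ∂P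
          = ∑ p, ∑ q, (b p * b q) * ∫ ω, G p ω j * G q ω k ∂P := by
        rw [show (∫ ω, Y ω j * Y ω k ∂P)
            = ∫ ω, ∑ p, ∑ q, (b p * b q) * (G p ω j * G q ω k) ∂P from by rw [← hexp j k]]
        rw [integral_finset_sum _ fun p _ => integrable_finset_sum _ fun q _ =>
          (hinteg p q j k).const_mul _]
        refine Finset.sum_congr rfl fun p _ => ?_
        rw [integral_finset_sum _ fun q _ => (hinteg p q j k).const_mul _]
        exact Finset.sum_congr rfl fun q _ => integral_const_mul _ _
      rw [h1]
      have h2 : ∀ p q : Fin n ⊕ Bool, (b p * b q) * ∫ ω, G p ω j * G q ω k ∂P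
          = (if p = q then (b p * b q) * ((Cv p j k + Cv p k j) / 2) else 0)
            + (b p * M p j) * (b q * M q k) := by
        intro p q
        rw [hmom p q j k]
        by_cases hpq : p = q
        · rw [if_pos hpq, if_pos hpq]; ring
        · rw [if_neg hpq, if_neg hpq]; ring
      simp_rw [h2]
      rw [Finset.sum_congr rfl fun p (_ : p ∈ Finset.univ) => Finset.sum_add_distrib,
        Finset.sum_add_distrib]
      have h3 : ∑ p : Fin n ⊕ Bool, ∑ q : Fin n ⊕ Bool,
          (b p * M p j) * (b q * M q k) = 0 := by
        rw [← Finset.sum_mul_sum]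
        rw [hmean j, zero_mul]
      rw [h3, add_zero]
      refine Finset.sum_congr rfl fun p _ => ?_
      have h4 : ∀ q : Fin n ⊕ Bool,
          (if p = q then (b p * b q) * ((Cv p j k + Cv p k j) / 2) else 0)
          = if q = p then (b p * b q) * ((Cv p j k + Cv p k j) / 2) else 0 := by
        intro q; by_cases h : p = q
        · rw [if_pos h, if_pos h.symm]
        · rw [if_neg h, if_neg fun hh => h hh.symm]
      simp_rw [h4]
      rw [Finset.sum_ite_eq' Finset.univ p
        (fun q => (b p * b q) * ((Cv p j k + Cv p k j) / 2)), if_pos (Finset.mem_univ p)]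
      ring
    -- expand the quadratic form
    have hquad : (fun ω => Y ω ⬝ᵥ A.mulVec (Y ω))
        = fun ω => ∑ j, ∑ k, A j k * (Y ω j * Y ω k) := by
      funext ω
      rw [dotProduct]
      simp only [Matrix.mulVec, dotProduct]
      refine Finset.sum_congr rfl fun j _ => ?_
      rw [Finset.mul_sum]
      exact Finset.sum_congr rfl fun k _ => by ring
    rw [show (∫ ω, Y ω ⬝ᵥ A.mulVec (Y ω) ∂P)
        = ∫ ω, ∑ j, ∑ k, A j k * (Y ω j * Y ω k) ∂P from by rw [← hquad]]
    rw [integral_finset_sum (f := fun j ω => ∑ k, A j k * (Y ω j * Y ω k)) _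
      fun j _ => integrable_finset_sum _ fun k _ =>
      (hYint j k).const_mul _]
    rw [Finset.sum_congr rfl fun j (_ : j ∈ Finset.univ) =>
      integral_finset_sum (f := fun k ω => A j k * (Y ω j * Y ω k)) _
        fun k _ => (hYint j k).const_mul _]
    simp_rw [integral_const_mul, hYmom]
    have step1 : ∀ j : Fin d, ∑ k, A j k * ∑ p, (b p) ^ 2 * ((Cv p j k + Cv p k j) / 2)
        = ∑ p, ∑ k, (b p) ^ 2 * (A j k * ((Cv p j k + Cv p k j) / 2)) := by
      intro j
      rw [← Finset.sum_comm]
      exact Finset.sum_congr rfl fun k _ => by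
        rw [Finset.mul_sum]
        exact Finset.sum_congr rfl fun p _ => by ring
    rw [Finset.sum_congr rfl fun j (_ : j ∈ Finset.univ) => step1 j, Finset.sum_comm]
    refine Finset.sum_congr rfl fun p _ => ?_
    rw [Finset.mul_sum]
    refine Finset.sum_congr rfl fun j _ => ?_
    rw [Finset.mul_sum]
  -- coefficients
  set β : Fin n ⊕ Bool → ℝ := Sum.elim (fun i => -α i) (fun b => if b then 1 else -1) with hβdef
  set γ : Fin n → Fin n ⊕ Bool → ℝ :=
    fun i => Sum.elim (fun m => (if m = i then (1:ℝ) else 0) - α m)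
      (fun b => if b then 0 else -1) with hγdef
  -- symmetry of S
  have hSsymm : ∀ j k, S k j = S j k := by
    intro j k
    conv_lhs => rw [← hS.1]
    simp [Matrix.conjTranspose_apply]
  -- values of the inner double sums
  have hQS : ∀ j k : Fin d, (S j k + S k j) / 2 = S j k := by
    intro j k; rw [hSsymm j k]; ring
  have hTS : ∑ j, ∑ k, A j k * ((S j k + S k j) / 2) = ∑ j, ∑ k, A j k * S j k := by
    refine Finset.sum_congr rfl fun j _ => Finset.sum_congr rfl fun k _ => by rw [hQS]
  have hTN : ∑ j, ∑ k, A j k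
        * (((σN2 • (1 : Matrix (Fin d) (Fin d) ℝ)) j k
          + (σN2 • (1 : Matrix (Fin d) (Fin d) ℝ)) k j) / 2)
      = σN2 * ∑ j, A j j := by
    rw [Finset.mul_sum]
    refine Finset.sum_congr rfl fun j _ => ?_
    have h1 : ∀ k, A j k * (((σN2 • (1 : Matrix (Fin d) (Fin d) ℝ)) j k
          + (σN2 • (1 : Matrix (Fin d) (Fin d) ℝ)) k j) / 2)
        = if k = j then σN2 * A j j else 0 := by
      intro k
      by_cases h : k = j
      · subst h
        rw [if_pos rfl, Matrix.smul_apply, Matrix.one_apply_eq]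
        simp only [smul_eq_mul, mul_one]
        ring
      · have hjk : j ≠ k := fun hh => h hh.symm
        rw [if_neg h, Matrix.smul_apply, Matrix.smul_apply, Matrix.one_apply_ne hjk,
          Matrix.one_apply_ne h]
        simp
    simp_rw [h1]
    rw [Finset.sum_ite_eq' Finset.univ j (fun _ => σN2 * A j j), if_pos (Finset.mem_univ j)]
  -- first integral
  have hmean1 : ∀ j, (∑ p, β p * M p j) = 0 := by
    intro j
    rw [Fintype.sum_sum_type]
    simp only [hβdef, hMdef, Sum.elim_inl, Sum.elim_inr, Fintype.sum_bool, eq_self_iff_true, if_true,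
      Bool.false_eq_true, if_false, Pi.zero_apply]
    have : ∑ i : Fin n, -α i * μ j = -((∑ i : Fin n, α i) * μ j) := by
      rw [Finset.sum_mul, ← Finset.sum_neg_distrib]
      exact Finset.sum_congr rfl fun i _ => by ring
    rw [this, hsum]
    ring
  have hY1 : ∀ ω (j : Fin d), (Zt ω - W ω) j = ∑ p, β p * G p ω j := by
    intro ω j
    rw [Fintype.sum_sum_type]
    simp only [hβdef, hGdef, Sum.elim_inl, Sum.elim_inr, Fintype.sum_bool, eq_self_iff_true, if_true,
      Bool.false_eq_true, if_false, Pi.sub_apply, hW, Pi.add_apply, Finset.sum_apply,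
      Pi.smul_apply, smul_eq_mul]
    have : ∑ i : Fin n, -α i * Z i ω j = -∑ i : Fin n, α i * Z i ω j := by
      rw [← Finset.sum_neg_distrib]
      exact Finset.sum_congr rfl fun i _ => by ring
    rw [this]
    ring
  have h1 := main β (fun ω => Zt ω - W ω) hY1 hmean1
  -- i-th integrals
  have hmean2 : ∀ i (j : Fin d), (∑ p, γ i p * M p j) = 0 := by
    intro i j
    rw [Fintype.sum_sum_type]
    simp only [hγdef, hMdef, Sum.elim_inl, Sum.elim_inr, Fintype.sum_bool, eq_self_iff_true, if_true,
      Bool.false_eq_true, if_false, Pi.zero_apply]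
    have : ∑ m : Fin n, ((if m = i then (1:ℝ) else 0) - α m) * μ j
        = (∑ m : Fin n, (if m = i then (1:ℝ) else 0) - ∑ m : Fin n, α m) * μ j := by
      rw [← Finset.sum_sub_distrib, Finset.sum_mul]
    rw [this, hsum, Finset.sum_ite_eq' Finset.univ i (fun _ => (1:ℝ)),
      if_pos (Finset.mem_univ i)]
    ring
  have hY2 : ∀ i ω (j : Fin d), (Z i ω - W ω) j = ∑ p, γ i p * G p ω j := by
    intro i ω j
    rw [Fintype.sum_sum_type]
    simp only [hγdef, hGdef, Sum.elim_inl, Sum.elim_inr, Fintype.sum_bool, eq_self_iff_true, if_true,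
      Bool.false_eq_true, if_false, Pi.sub_apply, hW, Pi.add_apply, Finset.sum_apply,
      Pi.smul_apply, smul_eq_mul]
    have h5 : ∑ m : Fin n, ((if m = i then (1:ℝ) else 0) - α m) * Z m ω j
        = (∑ m : Fin n, (if m = i then (1:ℝ) else 0) * Z m ω j)
          - ∑ m : Fin n, α m * Z m ω j := by
      rw [← Finset.sum_sub_distrib]
      exact Finset.sum_congr rfl fun m _ => by ring
    have h6 : ∑ m : Fin n, (if m = i then (1:ℝ) else 0) * Z m ω j = Z i ω j := by
      have : ∀ m : Fin n, (if m = i then (1:ℝ) else 0) * Z m ω j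
          = if m = i then Z m ω j else 0 := by
        intro m; by_cases h : m = i <;> simp [h]
      simp_rw [this]
      rw [Finset.sum_ite_eq' Finset.univ i (fun m => Z m ω j), if_pos (Finset.mem_univ i)]
    rw [h5, h6]
    ring
  have h2 : ∀ i, ∫ ω, (Z i ω - W ω) ⬝ᵥ A.mulVec (Z i ω - W ω) ∂P
      = ∑ p, (γ i p) ^ 2 * (∑ j, ∑ k, A j k * ((Cv p j k + Cv p k j) / 2)) :=
    fun i => main (γ i) (fun ω => Z i ω - W ω) (hY2 i) (hmean2 i)
  -- evaluate the sums over the index type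
  set T : ℝ := ∑ j, ∑ k, A j k * S j k with hTdef
  set trA : ℝ := ∑ j, A j j with htrAdef
  have hQ : ∀ p, (∑ j, ∑ k, A j k * ((Cv p j k + Cv p k j) / 2))
      = Sum.elim (fun _ : Fin n => T) (fun b : Bool => if b then T else σN2 * trA) p := by
    rintro (i | b)
    · simp only [hCvdef, Sum.elim_inl, Sum.elim_inr]; rw [hTS]
    · cases b
      · simp only [hCvdef, Sum.elim_inr, Bool.false_eq_true, if_false]; rw [hTN]
      · simp only [hCvdef, Sum.elim_inr, eq_self_iff_true, if_true]; rw [hTS]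
  have hE1 : ∫ ω, (Zt ω - W ω) ⬝ᵥ A.mulVec (Zt ω - W ω) ∂P
      = (∑ i, (α i) ^ 2) * T + T + σN2 * trA := by
    rw [h1]
    simp_rw [hQ]
    rw [Fintype.sum_sum_type]
    simp only [hβdef, Sum.elim_inl, Sum.elim_inr, Fintype.sum_bool, eq_self_iff_true, if_true,
      Bool.false_eq_true, if_false]
    rw [Finset.sum_mul (s := Finset.univ) (f := fun i => (α i)^2)]
    have : ∀ i : Fin n, (-α i) ^ 2 * T = (α i) ^ 2 * T := fun i => by ring
    simp_rw [this]
    ring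
  have hE2 : ∀ i, ∫ ω, (Z i ω - W ω) ⬝ᵥ A.mulVec (Z i ω - W ω) ∂P
      = (1 - 2 * α i + ∑ m, (α m) ^ 2) * T + σN2 * trA := by
    intro i
    rw [h2 i]
    simp_rw [hQ]
    rw [Fintype.sum_sum_type]
    simp only [hγdef, Sum.elim_inl, Sum.elim_inr, Fintype.sum_bool, eq_self_iff_true, if_true,
      Bool.false_eq_true, if_false]
    have hGam : ∑ m : Fin n, ((if m = i then (1:ℝ) else 0) - α m) ^ 2
        = 1 - 2 * α i + ∑ m, (α m) ^ 2 := by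
      have hterm : ∀ m : Fin n, ((if m = i then (1:ℝ) else 0) - α m) ^ 2
          = (if m = i then (1:ℝ) else 0) + ((α m) ^ 2 - if m = i then 2 * α m else 0) := by
        intro m; by_cases h : m = i
        · subst h; simp; ring
        · simp [h]
      simp_rw [hterm]
      rw [Finset.sum_add_distrib, Finset.sum_sub_distrib,
        Finset.sum_ite_eq' Finset.univ i (fun _ => (1:ℝ)), if_pos (Finset.mem_univ i),
        Finset.sum_ite_eq' Finset.univ i (fun m => 2 * α m), if_pos (Finset.mem_univ i)]
      ring
    rw [← Finset.sum_mul, hGam]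
    ring
  -- final assembly
  have hTr : (A * S).trace = T := by
    rw [hTdef, Matrix.trace]
    refine Finset.sum_congr rfl fun j _ => ?_
    rw [Matrix.diag_apply, Matrix.mul_apply]
    exact Finset.sum_congr rfl fun k _ => by rw [hSsymm j k]
  rw [hE1, Finset.sum_congr rfl fun i (_ : i ∈ Finset.univ) => hE2 i, hTr]
  rw [Finset.sum_add_distrib]
  have hn' : (n:ℝ) ≠ 0 := Nat.cast_ne_zero.mpr hn.ne'
  have hs1 : ∑ _x : Fin n, σN2 * trA = (n:ℝ) * (σN2 * trA) := by
    rw [Finset.sum_const, Finset.card_univ, Fintype.card_fin, nsmul_eq_mul]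
  have hs2 : ∑ x : Fin n, (1 - 2 * α x + ∑ m, (α m) ^ 2)
      = (n:ℝ) - 2 + (n:ℝ) * ∑ m, (α m) ^ 2 := by
    rw [Finset.sum_add_distrib, Finset.sum_sub_distrib, ← Finset.mul_sum, hsum,
      Finset.sum_const, Finset.card_univ, Fintype.card_fin, nsmul_eq_mul, mul_one,
      Finset.sum_const, Finset.card_univ, Fintype.card_fin, nsmul_eq_mul]
    ring
  rw [← Finset.sum_mul, hs2, hs1]
  field_simp
  ring
end

section
/- Tightness via loss decomposition in the vector Gaussian setting: with A = UDUᵀ the eigendecomposition of the symmetric positive definite matrix A (D = diag(λ₁,...,λ_d), U orthogonal with columns Uⱼ), the per-eigendirection bound evaluates as inf_{λ>0}[ (E[KL(P_{√λⱼUⱼᵀW|Zᵢ}‖Qⁱ)] + E[Λ_{F_{i,j},Qⁱ}(λ)])/λ ] = 2αᵢλⱼ·Tr[UⱼUⱼᵀΣ], where E[KL] = αᵢ²Tr[UⱼUⱼᵀΣ]/(2cⱼ), E[Λ(λ)] = 2λⱼ²λ²cⱼTr[UⱼUⱼᵀΣ], cⱼ = Σ_{k≠i}αₖ²UⱼᵀΣUⱼ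 + σ_N²; summing over j and averaging over i gives exactly 2·Tr[AΣ]/n, the true generalization error, using Σⱼ λⱼUⱼUⱼᵀ = A. -/
lemma aux_inf (a b : ℝ) (ha : 0 ≤ a) (hb : 0 ≤ b) :
    (⨅ l : Set.Ioi (0 : ℝ), (a + b * (l : ℝ) ^ 2) / (l : ℝ)) = 2 * Real.sqrt (a * b) := by
  have hlow : ∀ l : Set.Ioi (0 : ℝ), 2 * Real.sqrt (a * b) ≤ (a + b * (l : ℝ) ^ 2) / (l : ℝ) := by
    rintro ⟨l, hl⟩
    simp only [Set.mem_Ioi] at hl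
    rw [le_div_iff₀ hl, Real.sqrt_mul ha b]
    nlinarith [sq_nonneg (Real.sqrt a - Real.sqrt b * l), Real.sq_sqrt ha, Real.sq_sqrt hb,
      Real.sqrt_nonneg a, Real.sqrt_nonneg b]
  have hbdd : BddBelow (Set.range fun l : Set.Ioi (0 : ℝ) => (a + b * (l : ℝ) ^ 2) / (l : ℝ)) := by
    refine ⟨2 * Real.sqrt (a * b), ?_⟩
    rintro x ⟨l, rfl⟩
    exact hlow l
  refine le_antisymm ?_ (le_ciInf hlow)
  rcases eq_or_lt_of_le ha with ha0 | ha0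
  · -- a = 0
    subst ha0
    rw [zero_mul, Real.sqrt_zero, mul_zero]
    by_contra h
    push_neg at h
    set I := (⨅ l : Set.Ioi (0 : ℝ), ((0:ℝ) + b * (l : ℝ) ^ 2) / (l : ℝ)) with hI
    have hl : (0 : ℝ) < I / (2 * (b + 1)) := by positivity
    have hle := ciInf_le hbdd (⟨I / (2 * (b + 1)), hl⟩ : Set.Ioi (0 : ℝ))
    rw [← hI] at hle
    have hval : ((0:ℝ) + b * (I / (2 * (b + 1))) ^ 2) / (I / (2 * (b + 1)))
        = b * I / (2 * (b + 1)) := by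
      field_simp
      ring
    rw [hval] at hle
    rw [le_div_iff₀ (by positivity : (0:ℝ) < 2 * (b + 1))] at hle
    nlinarith [mul_nonneg hb h.le]
  rcases eq_or_lt_of_le hb with hb0 | hb0
  · -- b = 0, a > 0
    subst hb0
    rw [mul_zero, Real.sqrt_zero, mul_zero]
    by_contra h
    push_neg at h
    set I := (⨅ l : Set.Ioi (0 : ℝ), (a + (0:ℝ) * (l : ℝ) ^ 2) / (l : ℝ)) with hI
    have hl : (0 : ℝ) < 2 * (a + 1) / I := by positivity
    have hle := ciInf_le hbdd (⟨2 * (a + 1) / I, hl⟩ : Set.Ioi (0 : ℝ))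
    rw [← hI] at hle
    have hval : (a + (0:ℝ) * (2 * (a + 1) / I) ^ 2) / (2 * (a + 1) / I)
        = a * I / (2 * (a + 1)) := by
      field_simp
      ring
    rw [hval] at hle
    rw [le_div_iff₀ (by positivity : (0:ℝ) < 2 * (a + 1))] at hle
    nlinarith
  · -- a > 0, b > 0
    have hsa : (0:ℝ) < Real.sqrt a := Real.sqrt_pos.2 ha0
    have hsb : (0:ℝ) < Real.sqrt b := Real.sqrt_pos.2 hb0
    have hl : (0 : ℝ) < Real.sqrt a / Real.sqrt b := by positivity
    have hle := ciInf_le hbdd (⟨Real.sqrt a / Real.sqrt b, hl⟩ : Set.Ioi (0 : ℝ))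
    refine le_trans hle (le_of_eq ?_)
    have hval : (Real.sqrt a / Real.sqrt b) ^ 2 = a / b := by
      rw [div_pow, Real.sq_sqrt ha, Real.sq_sqrt hb]
    rw [hval, mul_div_cancel₀ _ (ne_of_gt hb0), Real.sqrt_mul ha b,
      div_eq_iff (ne_of_gt hl)]
    field_simp
    nlinarith [Real.sq_sqrt ha, Real.sq_sqrt hb]

open MeasureTheory ProbabilityTheory Real Matrix
open scoped NNReal ENNReal

/-- Tightness via loss decomposition in the vector Gaussian setting: the
per-eigendirection optimized bound equals 2αᵢλⱼTr[UⱼUⱼᵀΣ], and summing over j and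
averaging over i gives exactly 2Tr[AΣ]/n. -/
theorem tightness_via_decomposition
    (n d : ℕ) (hn : 0 < n) (σN2 : ℝ) (hσN : 0 ≤ σN2)
    (α : Fin n → ℝ) (hα : ∀ k, 0 ≤ α k) (hsum : ∑ k, α k = 1)
    (S : Matrix (Fin d) (Fin d) ℝ) (hS : S.PosSemidef)
    (lam : Fin d → ℝ) (hlam : ∀ j, 0 < lam j)
    (U : Fin d → Fin d → ℝ)
    (hU : ∀ j k, U j ⬝ᵥ U k = if j = k then 1 else 0)
    (A : Matrix (Fin d) (Fin d) ℝ)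
    (hA : A = ∑ j, lam j • Matrix.vecMulVec (U j) (U j))
    (T : Fin d → ℝ) (hT : ∀ j, T j = U j ⬝ᵥ S.mulVec (U j))
    (c : Fin n → Fin d → ℝ)
    (hc : ∀ i j, c i j = (∑ k ∈ Finset.univ.erase i, α k ^ 2) * T j + σN2)
    (hcpos : ∀ i j, 0 < c i j) :
    (∀ i j, (⨅ l : Set.Ioi (0 : ℝ),
        (α i ^ 2 * T j / (2 * c i j)
          + 2 * lam j ^ 2 * (l : ℝ) ^ 2 * c i j * T j) / (l : ℝ))
      = 2 * α i * lam j * T j)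
    ∧ (1 / n : ℝ) * ∑ i, ∑ j, 2 * α i * lam j * T j = 2 * (A * S).trace / n := by
  have hT0 : ∀ j, 0 ≤ T j := fun j => by rw [hT j]; simpa using hS.dotProduct_mulVec_nonneg (U j)
  constructor
  · intro i j
    have hcj := hcpos i j
    have heq : ∀ l : Set.Ioi (0 : ℝ),
        (α i ^ 2 * T j / (2 * c i j) + 2 * lam j ^ 2 * (l : ℝ) ^ 2 * c i j * T j) / (l : ℝ)
        = (α i ^ 2 * T j / (2 * c i j) + (2 * lam j ^ 2 * c i j * T j) * (l : ℝ) ^ 2) / (l : ℝ) := by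
      intro l; ring_nf
    have hlj := hlam j
    have hTj := hT0 j
    have hai := hα i
    rw [iInf_congr heq, aux_inf _ _ (by positivity) (by positivity)]
    have hab : (α i ^ 2 * T j / (2 * c i j)) * (2 * lam j ^ 2 * c i j * T j)
        = (α i * lam j * T j) ^ 2 := by
      field_simp
    rw [hab, Real.sqrt_sq (by positivity)]
    ring
  · have hSsymm : ∀ p q, S p q = S q p := by
      intro p q
      have h := hS.1
      rw [Matrix.IsHermitian] at h
      have := congrFun (congrFun h q) p
      simpa using this
    have htr : (A * S).trace = ∑ j, lam j * T j := by
      rw [hA, Finset.sum_mul, Matrix.trace_sum]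
      refine Finset.sum_congr rfl fun j _ => ?_
      rw [Matrix.smul_mul, Matrix.trace_smul, smul_eq_mul]
      congr 1
      rw [hT]
      simp only [Matrix.trace, Matrix.diag, Matrix.mul_apply, Matrix.vecMulVec_apply,
        dotProduct, Matrix.mulVec, Finset.mul_sum]
      rw [Finset.sum_comm]
      refine Finset.sum_congr rfl fun p _ => Finset.sum_congr rfl fun q _ => ?_
      ring
    rw [htr, Finset.sum_comm]
    have hcol : ∀ j, ∑ i, 2 * α i * lam j * T j = 2 * lam j * T j := by
      intro j
      rw [← Finset.sum_mul, ← Finset.sum_mul, ← Finset.mul_sum, hsum]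
      ring
    simp_rw [hcol]
    rw [Finset.mul_sum, Finset.mul_sum, Finset.sum_div]
    refine Finset.sum_congr rfl fun j _ => ?_
    ring
end
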